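/- arXiv:2206.00884 — 2 statements merged into one kernel-verified Lean document; each statement's English description precedes it below -/
import Mathlib

section
/- Let m, n be nonzero integers with |m| ≠ |n|. Then in BS(m,n), the cyclic subgroup ⟨t⟩ generated by the stable letter t is malnormal: for every g ∈ BS(m,n), if g⟨t⟩g⁻¹ ∩ ⟨t⟩ contains a nontrivial element, then g ∈ ⟨t⟩. -/
/-- The single defining relator `t a^m t⁻¹ (a^n)⁻¹` of the Baumslag–Solitar group `BS(m,n)`,
as an element of the free group on `Bool`, where `false` stands for the generator `a` and
`true` for the generator `t`. -/
def bsRel (m n : ℤ) : FreeGroup Bool :=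
  FreeGroup.of true * FreeGroup.of false ^ m * (FreeGroup.of true)⁻¹ *
    (FreeGroup.of false ^ n)⁻¹

/-- The Baumslag–Solitar group `BS(m,n) = ⟨a, t ∣ t a^m t⁻¹ = a^n⟩`. -/
abbrev BS (m n : ℤ) : Type := PresentedGroup ({bsRel m n} : Set (FreeGroup Bool))

/-- The generator `a` of `BS(m,n)`. -/
def BS.a (m n : ℤ) : BS m n := PresentedGroup.of false

/-- The generator `t` (stable letter) of `BS(m,n)`. -/
def BS.t (m n : ℤ) : BS m n := PresentedGroup.of true

/-- The `a`-line through `g` in `BS(m,n)`: the left coset `g⟨a⟩`. -/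
def aLine (m n : ℤ) (g : BS m n) : Set (BS m n) := {x | ∃ i : ℤ, x = g * BS.a m n ^ i}

/-- The `t`-line through `g` in `BS(m,n)`: the left coset `g⟨t⟩`. -/
def tLine (m n : ℤ) (g : BS m n) : Set (BS m n) := {x | ∃ i : ℤ, x = g * BS.t m n ^ i}

/-- A standard line in `BS(m,n)` is an `a`-line or a `t`-line. -/
def IsStandardLine (m n : ℤ) (ℓ : Set (BS m n)) : Prop :=
  (∃ g, ℓ = aLine m n g) ∨ (∃ g, ℓ = tLine m n g)

/-- A map `BS(m,n) → BS(m',n')` is line-preserving if the image of every standard line is a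
standard line. -/
def LinePreserving {m n m' n' : ℤ} (φ : BS m n → BS m' n') : Prop :=
  ∀ ℓ : Set (BS m n), IsStandardLine m n ℓ → IsStandardLine m' n' (φ '' ℓ)

namespace BSAux

open Multiplicative HNNExtension HNNExtension.NormalWord

variable (m n : ℤ)

abbrev G : Type := Multiplicative ℤ

def A (m : ℤ) : Subgroup G := Subgroup.zpowers (ofAdd m)
def B (n : ℤ) : Subgroup G := Subgroup.zpowers (ofAdd n)

lemma ofAdd_zpow' (a : ℤ) (j : ℤ) : (ofAdd a : G) ^ j = ofAdd (j * a) := by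
  rw [← ofAdd_zsmul, smul_eq_mul]

lemma mem_A_iff (x : G) : x ∈ A m ↔ m ∣ x.toAdd := by
  constructor
  · rintro ⟨j, rfl⟩
    show m ∣ toAdd (ofAdd m ^ j)
    rw [ofAdd_zpow']
    exact ⟨j, by simp [mul_comm]⟩
  · rintro ⟨j, hj⟩
    refine ⟨j, ?_⟩
    show ofAdd m ^ j = x
    rw [ofAdd_zpow', mul_comm, ← hj]; simp

lemma mem_B_iff (x : G) : x ∈ B n ↔ n ∣ x.toAdd := mem_A_iff n x

/-- The hom `mℤ → nℤ`. -/
def phiHom (hm : m ≠ 0) : A m →* B n where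
  toFun := fun a => ⟨ofAdd (n * ((a : G).toAdd / m)), (mem_B_iff n _).2 (Dvd.intro _ rfl)⟩
  map_one' := by
    ext; simp
  map_mul' := by
    rintro ⟨a, ha⟩ ⟨b, hb⟩
    obtain ⟨p, hp⟩ := (mem_A_iff m a).1 ha
    obtain ⟨q, hq⟩ := (mem_A_iff m b).1 hb
    ext
    simp only [Subgroup.coe_mul, Submonoid.mk_mul_mk]
    rw [show ((a*b : G).toAdd) = a.toAdd + b.toAdd from rfl, hp, hq, ← ofAdd_add, ← mul_add]
    congr 2
    rw [← mul_add, Int.mul_ediv_cancel_left _ hm, Int.mul_ediv_cancel_left _ hm,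
      Int.mul_ediv_cancel_left _ hm]

lemma phiHom_apply (hm : m ≠ 0) (j : ℤ) (h : (ofAdd (m * j) : G) ∈ A m) :
    phiHom m n hm ⟨ofAdd (m * j), h⟩ = ⟨ofAdd (n * j), (mem_B_iff n _).2 ⟨j, rfl⟩⟩ := by
  ext
  show ofAdd (n * (toAdd (ofAdd (m*j) : G) / m)) = ofAdd (n * j)
  rw [toAdd_ofAdd, Int.mul_ediv_cancel_left _ hm]

/-- The isomorphism `mℤ ≃ nℤ`. -/
noncomputable def phi (hm : m ≠ 0) (hn : n ≠ 0) : A m ≃* B n := by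
  refine MulEquiv.ofBijective (phiHom m n hm) ⟨?_, ?_⟩
  · rintro ⟨a, ha⟩ ⟨b, hb⟩ hab
    obtain ⟨p, hp⟩ := (mem_A_iff m a).1 ha
    obtain ⟨q, hq⟩ := (mem_A_iff m b).1 hb
    have : n * (a.toAdd / m) = n * (b.toAdd / m) := by
      have h2 : ((phiHom m n hm ⟨a, ha⟩ : B n) : G).toAdd = ((phiHom m n hm ⟨b, hb⟩ : B n) : G).toAdd := by
        rw [hab]
      simpa [phiHom] using h2
    rw [hp, hq, Int.mul_ediv_cancel_left _ hm, Int.mul_ediv_cancel_left _ hm,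
      mul_comm n p, mul_comm n q] at this
    have : p = q := mul_right_cancel₀ hn this
    have ha2 : a = b := by
      have : toAdd a = toAdd b := by rw [hp, hq, this]
      exact toAdd.injective this
    exact Subtype.ext ha2
  · rintro ⟨b, hb⟩
    obtain ⟨j, hj⟩ := (mem_B_iff n b).1 hb
    refine ⟨⟨ofAdd (m * j), (mem_A_iff m _).2 ⟨j, rfl⟩⟩, ?_⟩
    rw [phiHom_apply]
    ext
    show ofAdd (n*j) = b
    rw [← hj]; simp

lemma phi_apply (hm : m ≠ 0) (hn : n ≠ 0) (j : ℤ) (h : (ofAdd (m * j) : G) ∈ A m) :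
    phi m n hm hn ⟨ofAdd (m * j), h⟩ = ⟨ofAdd (n * j), (mem_B_iff n _).2 ⟨j, rfl⟩⟩ :=
  phiHom_apply m n hm j h

lemma phi_symm_apply (hm : m ≠ 0) (hn : n ≠ 0) (j : ℤ) (h : (ofAdd (n * j) : G) ∈ B n) :
    (phi m n hm hn).symm ⟨ofAdd (n * j), h⟩ = ⟨ofAdd (m * j), (mem_A_iff m _).2 ⟨j, rfl⟩⟩ := by
  apply (phi m n hm hn).injective
  rw [phi_apply m n hm hn j]
  simp


section HNNSide

variable (m n : ℤ) (hm : m ≠ 0) (hn : n ≠ 0)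

abbrev HNN := HNNExtension G (A m) (B n) (phi m n hm hn)

open HNNExtension

lemma t_conj_of (j : ℤ) :
    (t : HNN m n hm hn) * of (ofAdd (m * j)) * t⁻¹ = of (ofAdd (n * j)) := by
  have := equiv_eq_conj (φ := phi m n hm hn) ⟨ofAdd (m * j), (mem_A_iff m _).2 ⟨j, rfl⟩⟩
  rw [phi_apply m n hm hn j] at this
  exact this.symm

lemma inv_t_conj_of (j : ℤ) :
    (t : HNN m n hm hn)⁻¹ * of (ofAdd (n * j)) * t = of (ofAdd (m * j)) := by
  have := equiv_symm_eq_conj (φ := phi m n hm hn) ⟨ofAdd (n * j), (mem_B_iff n _).2 ⟨j, rfl⟩⟩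
  rw [phi_symm_apply m n hm hn j] at this
  exact this.symm

/-- The degree homomorphism to `ℤ`, killing `G` and sending `t` to `1`. -/
noncomputable def deg : HNN m n hm hn →* Multiplicative ℤ :=
  HNNExtension.lift 1 (ofAdd 1) (by intro a; simp)

@[simp] lemma deg_t : deg m n hm hn t = ofAdd 1 := by
  simp [deg]

@[simp] lemma deg_of (g : G) : deg m n hm hn (of g) = 1 := by
  simp [deg]

lemma t_zpow_injective : Function.Injective (fun k : ℤ => (t : HNN m n hm hn) ^ k) := by
  intro k l hkl
  have := congrArg (deg m n hm hn) hkl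
  simp only [map_zpow, deg_t] at this
  have : (k : ℤ) • (1:ℤ) = l • (1:ℤ) := by
    have h2 := congrArg toAdd this
    simpa [toAdd_zpow] using h2
  simpa using this

end HNNSide

section Words

variable (m n : ℤ) (hm : m ≠ 0) (hn : n ≠ 0)

open HNNExtension

/-- The letter-to-group-element map. -/
noncomputable abbrev letter : ℤˣ × G → HNN m n hm hn := fun x => t ^ (x.1 : ℤ) * of x.2

/-- The chain relation for reduced words. -/
abbrev Rel : ℤˣ × G → ℤˣ × G → Prop :=
  fun a b => a.2 ∈ toSubgroup (A m) (B n) a.1 → a.1 = b.1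

lemma chain'_replicate_append {α : Type*} {R : α → α → Prop} (j : ℕ) (x : α) (l : List α)
    (hx : R x x) (h : List.Chain' R (x :: l)) : List.Chain' R (List.replicate j x ++ l) := by
  induction j with
  | zero => exact h.tail
  | succ j ih =>
    rw [List.replicate_succ, List.cons_append]
    refine List.isChain_cons.2 ⟨?_, ih⟩
    intro y hy
    cases j with
    | zero => exact (List.isChain_cons.1 h).1 y (by simpa using hy)
    | succ j =>
      rw [List.replicate_succ, List.cons_append, List.head?_cons] at hy
      rw [Option.mem_some_iff] at hy
      subst hy; exact hx

lemma chain'_replicate {α : Type*} {R : α → α → Prop} (j : ℕ) (x : α)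
    (hx : R x x) : List.Chain' R (List.replicate j x) := by
  have := chain'_replicate_append (R := R) j x [] hx (by unfold List.Chain'; simp)
  simpa using this

lemma prod_letter_replicate_one (j : ℕ) :
    (List.map (letter m n hm hn) (List.replicate j ((1:ℤˣ), (1:G)))).prod = t ^ j := by
  rw [List.map_replicate, List.prod_replicate]
  show ((t : HNN m n hm hn) ^ ((1:ℤˣ):ℤ) * of (1:G))^j = _
  norm_num

lemma prod_letter_replicate_neg_one (j : ℕ) :
    (List.map (letter m n hm hn) (List.replicate j ((-1:ℤˣ), (1:G)))).prod = (t⁻¹) ^ j := by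
  rw [List.map_replicate, List.prod_replicate]
  show ((t : HNN m n hm hn) ^ (((-1:ℤˣ)):ℤ) * of (1:G))^j = _
  norm_num

lemma pinch (K : ℕ) (hK : 0 < K) (x : G)
    (h : (t : HNN m n hm hn) ^ K * of x * ((t : HNN m n hm hn) ^ K)⁻¹ ∈
      (of : G →* HNN m n hm hn).range) : x ∈ A m := by
  by_contra hx
  have inner : List.Chain' (Rel m n) (((1:ℤˣ), x) :: List.replicate K ((-1:ℤˣ), (1:G))) := by
    refine List.isChain_cons.2 ⟨?_, chain'_replicate _ _ (fun _ => rfl)⟩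
    intro y hy
    intro hxA
    exact absurd hxA hx
  have inner2 : List.Chain' (Rel m n) (((1:ℤˣ),(1:G)) :: ((1:ℤˣ), x) ::
      List.replicate K ((-1:ℤˣ),(1:G))) := by
    refine List.isChain_cons.2 ⟨?_, inner⟩
    intro y hy
    simp only [List.head?_cons, Option.mem_some_iff] at hy
    subst hy
    exact fun _ => rfl
  let w : ReducedWord G (A m) (B n) :=
    ⟨1, List.replicate (K-1) ((1:ℤˣ),(1:G)) ++ ((1:ℤˣ), x) :: List.replicate K ((-1:ℤˣ),(1:G)),
      chain'_replicate_append _ _ _ (fun _ => rfl) inner2⟩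
  have hprod : w.prod (phi m n hm hn) = t ^ K * of x * ((t : HNN m n hm hn) ^ K)⁻¹ := by
    show (of (1:G)) * _ = _
    rw [List.map_append, List.prod_append, prod_letter_replicate_one, List.map_cons,
      List.prod_cons, prod_letter_replicate_neg_one]
    rw [map_one, one_mul]
    show t^(K-1) * (t ^ ((1:ℤˣ):ℤ) * of x * (t⁻¹)^K) = _
    have h1 : ((1:ℤˣ):ℤ) = 1 := rfl
    rw [h1, zpow_one, inv_pow, ← mul_assoc, ← mul_assoc, ← pow_succ, Nat.sub_add_cancel hK]
  have := ReducedWord.toList_eq_nil_of_mem_of_range (phi m n hm hn) w (by rw [hprod]; exact h)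
  simp [w] at this

lemma conj_arith : ∀ (K : ℕ) (c c' : ℤ),
    (t : HNN m n hm hn)^(K+1) * of (ofAdd c) * ((t : HNN m n hm hn)^(K+1))⁻¹ = of (ofAdd c') →
    n^(K+1) * c = m^(K+1) * c' := by
  intro K
  induction K with
  | zero =>
    intro c c' h
    obtain ⟨j, hj⟩ := (mem_A_iff m _).1 (pinch m n hm hn 1 one_pos (ofAdd c) ⟨_, h.symm⟩)
    rw [toAdd_ofAdd] at hj
    subst hj
    have h2 := t_conj_of m n hm hn j
    rw [pow_one] at h
    have : (of (ofAdd (n * j)) : HNN m n hm hn) = of (ofAdd c') := by rw [← h2, h]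
    have := HNNExtension.of_injective (φ := phi m n hm hn) this
    have hc' : j * n = c' := by simpa using congrArg toAdd this
    rw [← hc']; ring
  | succ K ih =>
    intro c c' h
    obtain ⟨j, hj⟩ := (mem_A_iff m _).1
      (pinch m n hm hn (K+2) (Nat.succ_pos _) (ofAdd c) ⟨_, h.symm⟩)
    rw [toAdd_ofAdd] at hj
    subst hj
    have key : (t : HNN m n hm hn)^(K+2) * of (ofAdd (m*j)) * ((t : HNN m n hm hn)^(K+2))⁻¹
        = (t : HNN m n hm hn)^(K+1) * of (ofAdd (n*j)) * ((t : HNN m n hm hn)^(K+1))⁻¹ := by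
      rw [← t_conj_of m n hm hn j]
      rw [pow_succ]
      group
    rw [key] at h
    have := ih (n*j) c' h
    calc n^(K+1+1) * (m*j) = m * (n^(K+1) * (n*j)) := by ring
    _ = m * (m^(K+1) * c') := by rw [this]
    _ = m^(K+1+1) * c' := by ring

end Words

section Main

variable (m n : ℤ) (hm : m ≠ 0) (hn : n ≠ 0)

open HNNExtension

/-- A transversal pair containing `1` in each transversal. -/
noncomputable def dT : TransversalPair G (A m) (B n) :=
  ⟨fun u => ((toSubgroup (A m) (B n) u).exists_isComplement_right (1:G)).choose,
   fun u => ((toSubgroup (A m) (B n) u).exists_isComplement_right (1:G)).choose_spec.1⟩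

lemma one_mem_dT (u : ℤˣ) : (1:G) ∈ (dT m n).set u :=
  ((toSubgroup (A m) (B n) u).exists_isComplement_right (1:G)).choose_spec.2

lemma eq_one_of_mem_inter (u : ℤˣ) (s : G) (h1 : s ∈ toSubgroup (A m) (B n) u)
    (h2 : s ∈ (dT m n).set u) : s = 1 := by
  have hinj := ((dT m n).compl u).1
  have heq : (fun x : (toSubgroup (A m) (B n) u : Set G) × ((dT m n).set u) => (x.1 : G) * x.2)
      (⟨⟨s, h1⟩, ⟨1, one_mem_dT m n u⟩⟩) =
      (fun x : (toSubgroup (A m) (B n) u : Set G) × ((dT m n).set u) => (x.1 : G) * x.2)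
      (⟨⟨1, Subgroup.one_mem _⟩, ⟨s, h2⟩⟩) := by simp
  have := hinj heq
  have := congrArg (fun p => (p.2 : G)) this
  simpa using this.symm

lemma abs_pow_ne (hmn : |m| ≠ |n|) (K : ℕ) (hK : 0 < K) : m ^ K ≠ n ^ K := by
  intro h
  apply hmn
  have h2 : m.natAbs ^ K = n.natAbs ^ K := by
    have := congrArg Int.natAbs h
    simpa [Int.natAbs_pow] using this
  have := Nat.pow_left_injective hK.ne' h2
  rw [Int.abs_eq_natAbs, Int.abs_eq_natAbs, this]

lemma zero_case (hmn : |m| ≠ |n|) (K : ℕ) (hK : 0 < K) (c : G)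
    (hcomm : (t : HNN m n hm hn) ^ K * of c = of c * t ^ K) : c = 1 := by
  have h : (t : HNN m n hm hn)^K * of c * ((t : HNN m n hm hn)^K)⁻¹ = of c := by
    rw [hcomm]; group
  obtain ⟨K', rfl⟩ : ∃ K', K = K' + 1 := ⟨K-1, (Nat.succ_pred_eq_of_pos hK).symm⟩
  have hc : c = ofAdd (c.toAdd) := rfl
  rw [hc] at h
  have harith := conj_arith m n hm hn K' c.toAdd c.toAdd h
  by_cases hc0 : c.toAdd = 0
  · rw [hc, hc0]; rfl
  · exfalso
    exact abs_pow_ne n m (fun h => hmn h.symm) (K'+1) (Nat.succ_pos _)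
      (mul_right_cancel₀ hc0 harith)

end Main

section MainInduction

variable (m n : ℤ) (hm : m ≠ 0) (hn : n ≠ 0)

open HNNExtension

lemma head?_replicate_pos {α : Type*} (K : ℕ) (hK : 0 < K) (x : α) :
    (List.replicate K x).head? = some x := by
  obtain ⟨K', rfl⟩ : ∃ K', K = K' + 1 := ⟨K-1, (Nat.succ_pred_eq_of_pos hK).symm⟩
  rw [List.replicate_succ]; rfl

lemma nil_case (hmn : |m| ≠ |n|) (w : NormalWord (dT m n)) (hnil : w.toList = [])
    (K : ℕ) (hK : 0 < K)
    (hcomm : (t : HNN m n hm hn) ^ K * w.prod (phi m n hm hn) =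
      w.prod (phi m n hm hn) * t ^ K) :
    w.prod (phi m n hm hn) ∈ Subgroup.zpowers (t : HNN m n hm hn) := by
  have hp : w.prod (phi m n hm hn) = of w.head := by
    show of w.head * _ = _
    rw [hnil]; simp
  rw [hp] at hcomm ⊢
  rw [zero_case m n hm hn hmn K hK w.head hcomm, map_one]
  exact Subgroup.one_mem _

lemma main_aux (hmn : |m| ≠ |n|) :
    ∀ (r : ℕ) (w : NormalWord (dT m n)), w.toList.length ≤ r → ∀ (K : ℕ), 0 < K →
    (t : HNN m n hm hn) ^ K * w.prod (phi m n hm hn) = w.prod (phi m n hm hn) * t ^ K →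
    w.prod (phi m n hm hn) ∈ Subgroup.zpowers (t : HNN m n hm hn) := by
  intro r
  induction r with
  | zero =>
    intro w hr K hK hcomm
    exact nil_case m n hm hn hmn w (List.length_eq_zero_iff.1 (Nat.le_zero.1 hr)) K hK hcomm
  | succ r ih =>
    intro w hr K hK hcomm
    have hprodw : w.prod (phi m n hm hn) = of w.head *
        (List.map (letter m n hm hn) w.toList).prod := rfl
    have hcw : Commute ((t : HNN m n hm hn) ^ K) (w.prod (phi m n hm hn)) := hcomm
    have hctc : Commute ((t : HNN m n hm hn) ^ K) t := (Commute.refl t).pow_left K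
    rcases List.eq_nil_or_concat w.toList with hnil | ⟨L₀, last, hconcat⟩
    · exact nil_case m n hm hn hmn w hnil K hK hcomm
    rw [List.concat_eq_append] at hconcat
    by_cases hb : last.1 = -1 ∧ last.2 ∈ toSubgroup (A m) (B n) (-1)
    · -- last letter is `t⁻¹ ⬝ 1` : peel it on the right
      have hlast2 : last.2 = 1 := by
        refine eq_one_of_mem_inter m n (-1) last.2 hb.2 ?_
        have := w.mem_set last.1 last.2 (by rw [hconcat]; simp)
        rwa [hb.1] at this
      let w' : NormalWord (dT m n) :=
        ⟨⟨w.head, L₀, w.chain.prefix (by rw [hconcat]; exact ⟨[last], rfl⟩)⟩,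
          fun u g h => w.mem_set u g (by rw [hconcat]; exact List.mem_append_left _ h)⟩
      have hp' : w'.prod (phi m n hm hn) = w.prod (phi m n hm hn) * t := by
        have : w.prod (phi m n hm hn) = w'.prod (phi m n hm hn) * t⁻¹ := by
          rw [hprodw, hconcat]
          show _ = (of w.head * _) * _
          rw [List.map_append, List.prod_append, ← mul_assoc]
          congr 1
          show (List.map (letter m n hm hn) [last]).prod = t⁻¹
          have : last = ((-1 : ℤˣ), (1:G)) := Prod.ext hb.1 hlast2
          rw [this]
          show (t ^ ((-1:ℤˣ):ℤ) * of (1:G)) * 1 = t⁻¹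
          norm_num
        rw [this]; group
      have hcomm' : (t : HNN m n hm hn) ^ K * w'.prod (phi m n hm hn) =
          w'.prod (phi m n hm hn) * t ^ K := by
        rw [hp']; exact (hcw.mul_right hctc).eq
      have hlen : w'.toList.length ≤ r := by
        have := hr
        rw [hconcat] at this
        simpa using this
      have hmem := ih w' hlen K hK hcomm'
      rw [hp'] at hmem
      have := mul_mem hmem (inv_mem (Subgroup.mem_zpowers (t : HNN m n hm hn)))
      simpa using this
    · -- get the first letter
      rcases hL : w.toList with _ | ⟨⟨u₁, g₁⟩, L'⟩
      · exact nil_case m n hm hn hmn w hL K hK hcomm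
      have hmemtail : ∀ u g, (u, g) ∈ L' → g ∈ (dT m n).set u :=
        fun u g h => w.mem_set u g (by rw [hL]; exact List.mem_cons_of_mem _ h)
      have hchaintail : L'.Chain' (Rel m n) := by
        have := w.chain; rw [hL] at this; exact this.tail
      by_cases hd : w.head ∈ A m ∧ u₁ = -1
      · -- head ∈ A and first letter is t⁻¹ : peel `t` on the left
        obtain ⟨j, hj⟩ := (mem_A_iff m w.head).1 hd.1
        let w' : NormalWord (dT m n) := ⟨⟨ofAdd (n*j) * g₁, L', hchaintail⟩, hmemtail⟩
        have hp' : w'.prod (phi m n hm hn) = t * w.prod (phi m n hm hn) := by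
          rw [hprodw, hL]
          show of (ofAdd (n*j) * g₁) * _ = _
          rw [List.map_cons, List.prod_cons]
          show _ = t * (of w.head * ((t ^ ((u₁:ℤ)) * of g₁) * _))
          rw [hd.2]
          have hu : (((-1:ℤˣ)):ℤ) = -1 := rfl
          rw [hu, zpow_neg_one]
          have hhead : w.head = ofAdd (m * j) := by
            rw [← hj]; rfl
          rw [hhead, map_mul]
          rw [← t_conj_of m n hm hn j]
          group
          rfl
        have hcomm' : (t : HNN m n hm hn) ^ K * w'.prod (phi m n hm hn) =
            w'.prod (phi m n hm hn) * t ^ K := by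
          rw [hp']; exact (hctc.mul_right hcw).eq
        have hlen : w'.toList.length ≤ r := by
          have := hr; rw [hL] at this; simpa using this
        have hmem := ih w' hlen K hK hcomm'
        rw [hp'] at hmem
        have := mul_mem (inv_mem (Subgroup.mem_zpowers (t : HNN m n hm hn))) hmem
        simpa [← mul_assoc] using this
      · -- neither; compare the two reduced words for t^K * p = p * t^K
        have hchainw : w.toList.Chain' (Rel m n) := w.chain
        have ch₁ : List.Chain' (Rel m n)
            (List.replicate (K-1) ((1:ℤˣ),(1:G)) ++ ((1:ℤˣ), w.head) :: w.toList) := by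
          refine chain'_replicate_append _ _ _ (fun _ => rfl) ?_
          refine List.isChain_cons.2 ⟨?_, List.isChain_cons.2 ⟨?_, hchainw⟩⟩
          · intro y hy
            simp only [List.head?_cons, Option.mem_some_iff] at hy
            subst hy
            exact fun _ => rfl
          · intro y hy
            rw [hL] at hy
            simp only [List.head?_cons, Option.mem_some_iff] at hy
            subst hy
            intro hA
            have hu1 : u₁ ≠ -1 := fun h' => hd ⟨hA, h'⟩
            exact ((Int.units_eq_one_or u₁).resolve_right hu1).symm
        have ch₂ : List.Chain' (Rel m n)
            (w.toList ++ List.replicate K ((1:ℤˣ),(1:G))) := by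
          refine List.isChain_append.2 ⟨hchainw, chain'_replicate _ _ (fun _ => rfl), ?_⟩
          intro a ha b hbm
          rw [hconcat, List.getLast?_append_of_ne_nil _ (by simp)] at ha
          simp only [List.getLast?_singleton, Option.mem_some_iff] at ha
          rw [head?_replicate_pos K hK] at hbm
          rw [Option.mem_some_iff] at hbm
          subst ha; subst hbm
          intro hmem
          rcases Int.units_eq_one_or last.1 with h1 | h1
          · exact h1
          · exact absurd ⟨h1, h1 ▸ hmem⟩ hb
        let word₁ : ReducedWord G (A m) (B n) :=
          ⟨1, List.replicate (K-1) ((1:ℤˣ),(1:G)) ++ ((1:ℤˣ), w.head) :: w.toList, ch₁⟩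
        let word₂ : ReducedWord G (A m) (B n) :=
          ⟨w.head, w.toList ++ List.replicate K ((1:ℤˣ),(1:G)), ch₂⟩
        have prod₁ : word₁.prod (phi m n hm hn) =
            (t : HNN m n hm hn)^K * w.prod (phi m n hm hn) := by
          show of (1:G) * _ = _
          rw [List.map_append, List.prod_append, prod_letter_replicate_one,
            List.map_cons, List.prod_cons, map_one, one_mul]
          show t^(K-1) * ((t ^ ((1:ℤˣ):ℤ) * of w.head) * _) = _
          have h1 : ((1:ℤˣ):ℤ) = 1 := rfl
          rw [h1, zpow_one, hprodw, mul_assoc, ← mul_assoc (t^(K-1)) t _, ← pow_succ,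
            Nat.sub_add_cancel hK, ← mul_assoc]
        have prod₂ : word₂.prod (phi m n hm hn) =
            w.prod (phi m n hm hn) * (t : HNN m n hm hn)^K := by
          show of w.head * _ = _
          rw [List.map_append, List.prod_append, prod_letter_replicate_one, hprodw, mul_assoc]
        have heq : word₁.prod (phi m n hm hn) = word₂.prod (phi m n hm hn) := by
          rw [prod₁, prod₂, hcomm]
        obtain ⟨hfst, hhead⟩ := ReducedWord.map_fst_eq_and_of_prod_eq (phi m n hm hn) heq
        have hfst' : List.replicate K (1:ℤˣ) ++ List.map Prod.fst w.toList =
            List.map Prod.fst w.toList ++ List.replicate K (1:ℤˣ) := by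
          have e1 : List.map Prod.fst word₁.toList =
              List.replicate K (1:ℤˣ) ++ List.map Prod.fst w.toList := by
            show List.map Prod.fst (List.replicate (K-1) ((1:ℤˣ),(1:G)) ++
              ((1:ℤˣ), w.head) :: w.toList) = _
            rw [List.map_append, List.map_replicate, List.map_cons]
            show List.replicate (K-1) (1:ℤˣ) ++ (1:ℤˣ) :: List.map Prod.fst w.toList = _
            rw [← List.singleton_append, ← List.append_assoc, ← List.replicate_succ',
              Nat.sub_add_cancel hK]
          have e2 : List.map Prod.fst word₂.toList =
              List.map Prod.fst w.toList ++ List.replicate K (1:ℤˣ) := by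
            show List.map Prod.fst (w.toList ++ List.replicate K ((1:ℤˣ),(1:G))) = _
            rw [List.map_append, List.map_replicate]
          rw [← e1, ← e2, hfst]
        have hu₁ : u₁ = 1 := by
          have h := congrArg List.head? hfst'
          have hL1 : (List.replicate K (1:ℤˣ) ++ List.map Prod.fst w.toList).head? =
              some (1:ℤˣ) := by
            obtain ⟨K', rfl⟩ : ∃ K', K = K' + 1 := ⟨K-1, (Nat.succ_pred_eq_of_pos hK).symm⟩
            rw [List.replicate_succ]; rfl
          have hL2 : (List.map Prod.fst w.toList ++ List.replicate K (1:ℤˣ)).head? =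
              some u₁ := by
            rw [hL]; rfl
          rw [hL1, hL2] at h
          exact (Option.some_inj.1 h).symm
        have hheadB : w.head ∈ B n := by
          have h1 : word₁.toList.head?.map Prod.fst = some (1:ℤˣ) := by
            rw [← List.head?_map]
            show (List.map Prod.fst word₁.toList).head? = _
            have e1 : List.map Prod.fst word₁.toList =
                List.replicate K (1:ℤˣ) ++ List.map Prod.fst w.toList := by
              show List.map Prod.fst (List.replicate (K-1) ((1:ℤˣ),(1:G)) ++
                ((1:ℤˣ), w.head) :: w.toList) = _
              rw [List.map_append, List.map_replicate, List.map_cons]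
              show List.replicate (K-1) (1:ℤˣ) ++ (1:ℤˣ) :: List.map Prod.fst w.toList = _
              rw [← List.singleton_append, ← List.append_assoc, ← List.replicate_succ',
                Nat.sub_add_cancel hK]
            rw [e1]
            obtain ⟨K', rfl⟩ : ∃ K', K = K' + 1 := ⟨K-1, (Nat.succ_pred_eq_of_pos hK).symm⟩
            rw [List.replicate_succ]; rfl
          have := hhead 1 (by rw [h1]; rfl)
          have h2 : word₁.head⁻¹ * word₂.head = w.head := by
            show (1:G)⁻¹ * w.head = w.head
            simp
          rw [h2] at this
          exact this
        obtain ⟨j, hj⟩ := (mem_B_iff n w.head).1 hheadB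
        let w' : NormalWord (dT m n) := ⟨⟨ofAdd (m*j) * g₁, L', hchaintail⟩, hmemtail⟩
        have hp' : w'.prod (phi m n hm hn) = t⁻¹ * w.prod (phi m n hm hn) := by
          rw [hprodw, hL]
          show of (ofAdd (m*j) * g₁) * _ = _
          rw [List.map_cons, List.prod_cons]
          show _ = t⁻¹ * (of w.head * ((t ^ ((u₁:ℤ)) * of g₁) * _))
          rw [hu₁]
          have hu : (((1:ℤˣ)):ℤ) = 1 := rfl
          rw [hu, zpow_one]
          have hhead : w.head = ofAdd (n * j) := by
            rw [← hj]; rfl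
          rw [hhead, map_mul]
          rw [← inv_t_conj_of m n hm hn j]
          group
          rfl
        have hcomm' : (t : HNN m n hm hn) ^ K * w'.prod (phi m n hm hn) =
            w'.prod (phi m n hm hn) * t ^ K := by
          rw [hp']; exact (hctc.inv_right.mul_right hcw).eq
        have hlen : w'.toList.length ≤ r := by
          have := hr; rw [hL] at this; simpa using this
        have hmem := ih w' hlen K hK hcomm'
        rw [hp'] at hmem
        have := mul_mem (Subgroup.mem_zpowers (t : HNN m n hm hn)) hmem
        simpa [← mul_assoc] using this

end MainInduction

section Final

variable (m n : ℤ) (hm : m ≠ 0) (hn : n ≠ 0)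

open HNNExtension

lemma hnn_malnormal (hmn : |m| ≠ |n|) (h : HNN m n hm hn) (k l : ℤ) (hk : k ≠ 0)
    (heq : h⁻¹ * t ^ k * h = t ^ l) : h ∈ Subgroup.zpowers (t : HNN m n hm hn) := by
  have hl : l = k := by
    have hd := congrArg (deg m n hm hn) heq
    simp only [map_mul, map_inv, map_zpow, deg_t] at hd
    have h2 : (ofAdd (1:ℤ))^k = (ofAdd (1:ℤ))^l := by
      rw [← hd, mul_comm ((deg m n hm hn h)⁻¹) _, mul_assoc]
      simp
    have h3 := congrArg toAdd h2
    simp only [toAdd_zpow, toAdd_ofAdd, smul_eq_mul, mul_one] at h3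
    exact h3.symm
  subst hl
  have hcomm : (t : HNN m n hm hn) ^ l * h = h * t ^ l := by
    conv_rhs => rw [← heq]
    group
  have hcommN : (t : HNN m n hm hn) ^ (l.natAbs) * h = h * t ^ (l.natAbs) := by
    rcases lt_or_gt_of_ne hk with hneg | hpos
    · have habs : ((l.natAbs : ℤ)) = -l := by omega
      have : (t : HNN m n hm hn) ^ (l.natAbs) = (t ^ l)⁻¹ := by
        rw [← zpow_natCast, habs, zpow_neg]
      rw [this]
      exact ((Commute.inv_left (hcomm : Commute _ _))).eq
    · have habs : ((l.natAbs : ℤ)) = l := Int.natAbs_of_nonneg hpos.le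
      have : (t : HNN m n hm hn) ^ (l.natAbs) = t ^ l := by
        rw [← zpow_natCast, habs]
      rw [this]; exact hcomm
  have hKpos : 0 < l.natAbs := Int.natAbs_pos.2 hk
  have hprod : ((NormalWord.equiv (phi m n hm hn) (dT m n)) h).prod (phi m n hm hn) = h :=
    (NormalWord.equiv (phi m n hm hn) (dT m n)).left_inv h
  have := main_aux m n hm hn hmn
    (((NormalWord.equiv (phi m n hm hn) (dT m n)) h).toList.length)
    ((NormalWord.equiv (phi m n hm hn) (dT m n)) h) le_rfl l.natAbs hKpos
    (by rw [hprod]; exact hcommN)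
  rwa [hprod] at this

/-- The relation in `BS(m,n)`. -/
lemma bs_rel : BS.t m n * BS.a m n ^ m * (BS.t m n)⁻¹ = BS.a m n ^ n := by
  have h1 : PresentedGroup.mk ({bsRel m n} : Set (FreeGroup Bool)) (bsRel m n) = 1 := by
    have : bsRel m n ∈ Subgroup.normalClosure ({bsRel m n} : Set (FreeGroup Bool)) :=
      Subgroup.subset_normalClosure rfl
    exact (QuotientGroup.eq_one_iff _).2 this
  have h2 : PresentedGroup.mk ({bsRel m n} : Set (FreeGroup Bool)) (bsRel m n) =
      BS.t m n * BS.a m n ^ m * (BS.t m n)⁻¹ * (BS.a m n ^ n)⁻¹ := by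
    show PresentedGroup.mk _ (FreeGroup.of true * FreeGroup.of false ^ m *
      (FreeGroup.of true)⁻¹ * (FreeGroup.of false ^ n)⁻¹) = _
    rw [map_mul, map_mul, map_mul, map_inv, map_inv, map_zpow, map_zpow]
    rfl
  rw [h2] at h1
  have := mul_eq_one_iff_eq_inv.1 h1
  rw [this]
  group

end Final

section Transfer

variable (m n : ℤ) (hm : m ≠ 0) (hn : n ≠ 0)

open HNNExtension

/-- Generator images for the map `BS(m,n) → HNN`. -/
noncomputable def genMap : Bool → HNN m n hm hn :=
  fun b => match b with
  | true => t
  | false => of (ofAdd (1:ℤ))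

lemma ofAdd_one_zpow (k : ℤ) : (ofAdd (1:ℤ)) ^ k = ofAdd k := by
  rw [ofAdd_zpow', mul_one]

noncomputable def bsToHnn : BS m n →* HNN m n hm hn :=
  PresentedGroup.toGroup (f := genMap m n hm hn) (by
    intro r hr
    rw [Set.mem_singleton_iff] at hr
    subst hr
    rw [bsRel]
    simp only [map_mul, map_inv, map_zpow, FreeGroup.lift_apply_of]
    show genMap m n hm hn true * (genMap m n hm hn false) ^ m *
      (genMap m n hm hn true)⁻¹ * ((genMap m n hm hn false) ^ n)⁻¹ = 1
    show (t : HNN m n hm hn) * (of (ofAdd (1:ℤ))) ^ m * t⁻¹ * ((of (ofAdd (1:ℤ))) ^ n)⁻¹ = 1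
    rw [← map_zpow (of : G →* HNN m n hm hn), ← map_zpow (of : G →* HNN m n hm hn),
      ofAdd_one_zpow, ofAdd_one_zpow]
    have h1 := t_conj_of m n hm hn 1
    rw [mul_one, mul_one] at h1
    rw [h1]
    simp)

lemma bsToHnn_t : bsToHnn m n hm hn (BS.t m n) = t := by
  show bsToHnn m n hm hn (PresentedGroup.of true) = t
  rw [bsToHnn, PresentedGroup.toGroup.of]
  rfl

lemma bs_conj_zpow (j : ℤ) :
    BS.t m n * BS.a m n ^ (m * j) * (BS.t m n)⁻¹ = BS.a m n ^ (n * j) := by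
  rw [zpow_mul, zpow_mul]
  have h := map_zpow (MulAut.conj (BS.t m n)) (BS.a m n ^ m) j
  simp only [MulAut.conj_apply] at h
  rw [h, bs_rel]

noncomputable def hnnToBs : HNN m n hm hn →* BS m n :=
  HNNExtension.lift (zpowersHom (BS m n) (BS.a m n)) (BS.t m n) (by
    intro a
    obtain ⟨j, hj⟩ := (mem_A_iff m (a : G)).1 a.2
    have ha : (a : G) = ofAdd (m*j) := by rw [← hj]; rfl
    have ha' : a = ⟨ofAdd (m*j), (mem_A_iff m _).2 ⟨j, by simp [mul_comm]⟩⟩ := Subtype.ext ha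
    have hphi : ((phi m n hm hn a : G)) = ofAdd (n*j) := by
      rw [ha', phi_apply]
    rw [zpowersHom_apply, zpowersHom_apply, ha, hphi, toAdd_ofAdd, toAdd_ofAdd]
    have := bs_conj_zpow m n j
    calc BS.t m n * BS.a m n ^ (m*j)
        = (BS.t m n * BS.a m n ^ (m*j) * (BS.t m n)⁻¹) * BS.t m n := by group
      _ = BS.a m n ^ (n*j) * BS.t m n := by rw [this])

lemma hnnToBs_t : hnnToBs m n hm hn t = BS.t m n := by
  rw [hnnToBs, HNNExtension.lift_t]

lemma retract (g : BS m n) : hnnToBs m n hm hn (bsToHnn m n hm hn g) = g := by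
  have : (hnnToBs m n hm hn).comp (bsToHnn m n hm hn) = MonoidHom.id (BS m n) := by
    apply PresentedGroup.ext
    intro b
    cases b
    · show hnnToBs m n hm hn (bsToHnn m n hm hn (PresentedGroup.of false)) = _
      rw [bsToHnn, PresentedGroup.toGroup.of]
      show hnnToBs m n hm hn (of (ofAdd (1:ℤ))) = _
      rw [hnnToBs, HNNExtension.lift_of, zpowersHom_apply, toAdd_ofAdd, zpow_one]
      rfl
    · show hnnToBs m n hm hn (bsToHnn m n hm hn (PresentedGroup.of true)) = _
      have := bsToHnn_t m n hm hn
      rw [show PresentedGroup.of true = BS.t m n from rfl, this, hnnToBs_t]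
      rfl
  have := congrArg (fun f => (f : BS m n →* BS m n) g) this
  simpa using this

end Transfer

theorem zpowers_t_malnormal' (m n : ℤ) (hm : m ≠ 0) (hn : n ≠ 0) (hmn : |m| ≠ |n|) :
    ∀ g : BS m n,
      (∃ x : BS m n, x ≠ 1 ∧ x ∈ Subgroup.zpowers (BS.t m n) ∧
        g⁻¹ * x * g ∈ Subgroup.zpowers (BS.t m n)) →
      g ∈ Subgroup.zpowers (BS.t m n) := by
  rintro g ⟨x, hx1, hxmem, hconj⟩
  obtain ⟨k, hk⟩ := Subgroup.mem_zpowers_iff.1 hxmem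
  obtain ⟨l, hl⟩ := Subgroup.mem_zpowers_iff.1 hconj
  have hk0 : k ≠ 0 := by
    rintro rfl
    rw [zpow_zero] at hk
    exact hx1 hk.symm
  have himg : (bsToHnn m n hm hn g)⁻¹ * (t : HNN m n hm hn) ^ k * bsToHnn m n hm hn g =
      t ^ l := by
    have h2 := congrArg (bsToHnn m n hm hn) hl
    rw [← hk] at h2
    simp only [map_mul, map_inv, map_zpow, bsToHnn_t] at h2
    exact h2.symm
  have hmem := hnn_malnormal m n hm hn hmn (bsToHnn m n hm hn g) k l hk0 himg
  obtain ⟨s, hs⟩ := Subgroup.mem_zpowers_iff.1 hmem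
  refine Subgroup.mem_zpowers_iff.2 ⟨s, ?_⟩
  have := congrArg (hnnToBs m n hm hn) hs
  rw [map_zpow, hnnToBs_t, retract] at this
  exact this


end BSAux

/-- For `|m| ≠ |n|` (both nonzero), the cyclic subgroup `⟨t⟩` of `BS(m,n)`
is malnormal: if `g⟨t⟩g⁻¹ ∩ ⟨t⟩` contains a nontrivial element, then `g ∈ ⟨t⟩`. -/
theorem zpowers_t_malnormal (m n : ℤ) (hm : m ≠ 0) (hn : n ≠ 0) (hmn : |m| ≠ |n|) :
    ∀ g : BS m n,
      (∃ x : BS m n, x ≠ 1 ∧ x ∈ Subgroup.zpowers (BS.t m n) ∧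
        g⁻¹ * x * g ∈ Subgroup.zpowers (BS.t m n)) →
      g ∈ Subgroup.zpowers (BS.t m n) :=
  BSAux.zpowers_t_malnormal' m n hm hn hmn
end

section
/- Let m, n be nonzero integers. Then in BS(m,n), the cyclic subgroup ⟨a⟩ is commensurated: for every g ∈ BS(m,n), the intersection g⟨a⟩g⁻¹ ∩ ⟨a⟩ has finite index both in ⟨a⟩ and in g⟨a⟩g⁻¹. -/
open Subgroup

/-- In any group, the relative index of `⟨x^q⟩` in `⟨x⟩` is finite (nonzero) for `q ≠ 0`. -/
lemma relindex_zpowers_zpow_ne_zero {G : Type*} [Group G] (x : G) {q : ℤ} (hq : q ≠ 0) :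
    (zpowers (x ^ q)).relIndex (zpowers x) ≠ 0 := by
  haveI : NeZero q.natAbs := ⟨Int.natAbs_ne_zero.mpr hq⟩
  set N := (zpowers (x ^ q)).subgroupOf (zpowers x) with hN
  have hfin : Finite ((zpowers x) ⧸ N) := by
    refine Finite.of_surjective (fun k : ZMod q.natAbs =>
      (QuotientGroup.mk (⟨x ^ (k.val : ℤ), zpow_mem (mem_zpowers x) _⟩ : zpowers x))) ?_
    rintro y
    induction y using QuotientGroup.induction_on with
    | H z =>
      obtain ⟨j, hj⟩ := mem_zpowers_iff.mp z.2
      refine ⟨(j : ZMod q.natAbs), ?_⟩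
      refine (QuotientGroup.eq).mpr ?_
      rw [hN, mem_subgroupOf]
      have hval : (((j : ZMod q.natAbs).val : ℤ)) = j % (q.natAbs : ℤ) := ZMod.val_intCast j
      have hdvd : (q.natAbs : ℤ) ∣ j - ((j : ZMod q.natAbs).val : ℤ) := by
        rw [hval, Int.emod_def]; ring_nf; exact Dvd.intro _ rfl
      have hdvd' : q ∣ j - ((j : ZMod q.natAbs).val : ℤ) :=
        (Int.natAbs_dvd).mp hdvd
      obtain ⟨s, hs⟩ := hdvd'
      have : ((⟨x ^ (((j : ZMod q.natAbs).val : ℤ)), zpow_mem (mem_zpowers x) _⟩ : zpowers x)⁻¹ * z : G)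
          = (x ^ q) ^ s := by
        have h2 : (z : G) = x ^ j := hj.symm
        push_cast
        rw [h2, ← zpow_mul, ← zpow_neg, ← zpow_add, ← hs]
        ring_nf
      exact mem_zpowers_iff.mpr ⟨s, this.symm⟩
  exact Subgroup.index_ne_zero_of_finite

/-- Relative index is invariant under a group isomorphism. -/
lemma relindex_map_equiv {G H : Type*} [Group G] [Group H] (e : G ≃* H) (A B : Subgroup G) :
    (A.map e.toMonoidHom).relIndex (B.map e.toMonoidHom) = A.relIndex B := by
  rw [map_equiv_eq_comap_symm', relIndex_comap, map_map]
  congr 1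
  simp [B.map_id]

lemma conj_key_mul {G : Type*} [Group G] {a g h : G} {p q p' q' : ℤ}
    (hg : g * a ^ p * g⁻¹ = a ^ q) (hh : h * a ^ p' * h⁻¹ = a ^ q') :
    (g * h) * a ^ (p' * p) * (g * h)⁻¹ = a ^ (q * q') := by
  have h1 : h * a ^ (p' * p) * h⁻¹ = a ^ (q' * p) := by
    rw [zpow_mul, zpow_mul, ← hh, conj_zpow]
  have h2 : g * a ^ (q' * p) * g⁻¹ = a ^ (q * q') := by
    rw [mul_comm q' p, zpow_mul, zpow_mul, ← hg, conj_zpow]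
  calc (g * h) * a ^ (p' * p) * (g * h)⁻¹
      = g * (h * a ^ (p' * p) * h⁻¹) * g⁻¹ := by group
    _ = g * a ^ (q' * p) * g⁻¹ := by rw [h1]
    _ = a ^ (q * q') := h2

lemma BS.relation (m n : ℤ) : BS.t m n * BS.a m n ^ m * (BS.t m n)⁻¹ = BS.a m n ^ n := by
  have h : PresentedGroup.mk ({bsRel m n} : Set (FreeGroup Bool)) (bsRel m n) = 1 :=
    (QuotientGroup.eq_one_iff _).mpr
      (Subgroup.subset_normalClosure (Set.mem_singleton _))
  rw [bsRel] at h
  simp only [map_mul, map_zpow, map_inv] at h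
  exact mul_inv_eq_one.mp h

lemma BS.conj_key (m n : ℤ) (hm : m ≠ 0) (hn : n ≠ 0) (g : BS m n) :
    ∃ p q : ℤ, p ≠ 0 ∧ q ≠ 0 ∧ g * BS.a m n ^ p * g⁻¹ = BS.a m n ^ q := by
  induction g using PresentedGroup.induction_on with
  | H z =>
    induction z using FreeGroup.induction_on with
    | C1 => exact ⟨1, 1, one_ne_zero, one_ne_zero, by simp⟩
    | of x =>
      cases x with
      | false =>
        refine ⟨1, 1, one_ne_zero, one_ne_zero, ?_⟩
        show BS.a m n * BS.a m n ^ (1:ℤ) * (BS.a m n)⁻¹ = BS.a m n ^ (1:ℤ)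
        group
      | true =>
        exact ⟨m, n, hm, hn, BS.relation m n⟩
    | inv_of x ih =>
      obtain ⟨p, q, hp, hq, h⟩ := ih
      refine ⟨q, p, hq, hp, ?_⟩
      rw [map_inv]
      have : BS.a m n ^ p = (PresentedGroup.mk _ (FreeGroup.of x))⁻¹ * BS.a m n ^ q
          * PresentedGroup.mk _ (FreeGroup.of x) := by
        rw [← h]; group
      rw [this]; group
    | mul x y ihx ihy =>
      obtain ⟨p, q, hp, hq, hx⟩ := ihx
      obtain ⟨p', q', hp', hq', hy⟩ := ihy
      exact ⟨p' * p, q * q', mul_ne_zero hp' hp, mul_ne_zero hq hq',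
        by rw [map_mul]; exact conj_key_mul hx hy⟩

/-- For any nonzero `m, n`, the subgroup `⟨a⟩` of `BS(m,n)` is
commensurated: for every `g`, the intersection `g⟨a⟩g⁻¹ ∩ ⟨a⟩` has finite index both in
`⟨a⟩` and in `g⟨a⟩g⁻¹`. (`Subgroup.relindex H K = 0` encodes infinite index.) -/
theorem zpowers_a_commensurated (m n : ℤ) (hm : m ≠ 0) (hn : n ≠ 0) (g : BS m n) :
    ((Subgroup.zpowers (BS.a m n)).map (MulAut.conj g).toMonoidHom ⊓
        Subgroup.zpowers (BS.a m n)).relIndex (Subgroup.zpowers (BS.a m n)) ≠ 0 ∧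
    ((Subgroup.zpowers (BS.a m n)).map (MulAut.conj g).toMonoidHom ⊓
        Subgroup.zpowers (BS.a m n)).relIndex
      ((Subgroup.zpowers (BS.a m n)).map (MulAut.conj g).toMonoidHom) ≠ 0 := by
  obtain ⟨p, q, hp, hq, hpq⟩ := BS.conj_key m n hm hn g
  set a := BS.a m n with ha
  set e := (MulAut.conj g) with he
  have heq : e.toMonoidHom (a ^ p) = a ^ q := by
    simpa [he, MulAut.conj_apply] using hpq
  have hq1 : a ^ q ∈ (zpowers a).map e.toMonoidHom :=
    ⟨a ^ p, zpow_mem (mem_zpowers a) p, heq⟩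
  have hmem : a ^ q ∈ (zpowers a).map e.toMonoidHom ⊓ zpowers a :=
    ⟨hq1, zpow_mem (mem_zpowers a) q⟩
  have hle : zpowers (a ^ q) ≤ (zpowers a).map e.toMonoidHom ⊓ zpowers a :=
    zpowers_le.mpr hmem
  constructor
  · intro h0
    have hdvd := Subgroup.relIndex_dvd_of_le_left (zpowers a) hle
    rw [h0] at hdvd
    exact relindex_zpowers_zpow_ne_zero a hq (zero_dvd_iff.mp hdvd)
  · intro h0
    have hdvd := Subgroup.relIndex_dvd_of_le_left ((zpowers a).map e.toMonoidHom) hle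
    rw [h0] at hdvd
    have h2 : zpowers (a ^ q) = (zpowers (a ^ p)).map e.toMonoidHom := by
      rw [MonoidHom.map_zpowers, heq]
    rw [h2, relindex_map_equiv] at hdvd
    exact relindex_zpowers_zpow_ne_zero a hp (zero_dvd_iff.mp hdvd)
end
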